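/- If P1, P2 ∈ SBrNDC and L ⊆ A, then (Q1 ∥_L Q2)∖A_H ≈_b (R1 ∥_L R2)∖A_H for all Q1, R1 ∈ reach(P1) and Q2, R2 ∈ reach(P2) such that Q1 ∥_L Q2 and R1 ∥_L R2 belong to reach(P1 ∥_L P2), Q1∖A_H ≈_b R1∖A_H, and Q2∖A_H ≈_b R2∖A_H. -/
import Mathlib


namespace SecurityNI

/-- Process terms: `0`, action prefix (`none` = τ, `some a` = observable action),
choice, CSP-style parallel composition with synchronization set, restriction,
hiding, and constants (whose defining equations are given by an environment). -/
inductive Proc (A : Type) (C : Type) : Type where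
  | nil : Proc A C
  | pre : Option A → Proc A C → Proc A C
  | choice : Proc A C → Proc A C → Proc A C
  | par : Set A → Proc A C → Proc A C → Proc A C
  | restrict : Proc A C → Set A → Proc A C
  | hide : Proc A C → Set A → Proc A C
  | const : C → Proc A C

variable {A C : Type}

/-- A process term is guarded when every constant occurrence is in the scope
of an action prefix operator. -/
def Guarded : Proc A C → Prop
  | .nil => True
  | .pre _ _ => True
  | .choice p q => Guarded p ∧ Guarded q
  | .par _ p q => Guarded p ∧ Guarded q
  | .restrict p _ => Guarded p
  | .hide p _ => Guarded p
  | .const _ => False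

/-- Operational semantics, parameterized by the defining equations `env` of
the constants.  Labels are `Option A`, with `none` playing the role of τ. -/
inductive Trans (env : C → Proc A C) : Proc A C → Option A → Proc A C → Prop where
  | pre (a : Option A) (p : Proc A C) : Trans env (.pre a p) a p
  | choiceL {p q a p'} (h : Trans env p a p') : Trans env (.choice p q) a p'
  | choiceR {p q a q'} (h : Trans env q a q') : Trans env (.choice p q) a q'
  | parL {L p q a p'} (h : Trans env p a p') (hn : ∀ x, a = some x → x ∉ L) :
      Trans env (.par L p q) a (.par L p' q)
  | parR {L p q a q'} (h : Trans env q a q') (hn : ∀ x, a = some x → x ∉ L) :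
      Trans env (.par L p q) a (.par L p q')
  | sync {L p q x p' q'} (h1 : Trans env p (some x) p') (h2 : Trans env q (some x) q')
      (hx : x ∈ L) : Trans env (.par L p q) (some x) (.par L p' q')
  | res {p a p' L} (h : Trans env p a p') (hn : ∀ x, a = some x → x ∉ L) :
      Trans env (.restrict p L) a (.restrict p' L)
  | hideIn {p x p' L} (h : Trans env p (some x) p') (hx : x ∈ L) :
      Trans env (.hide p L) none (.hide p' L)
  | hideOut {p a p' L} (h : Trans env p a p') (hn : ∀ x, a = some x → x ∉ L) :
      Trans env (.hide p L) a (.hide p' L)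
  | const {c a p'} (h : Trans env (env c) a p') : Trans env (.const c) a p'

section LTS

variable {S : Type} (tr : S → Option A → S → Prop)

/-- Finitely many (possibly zero) τ-transitions. -/
def TauStar : S → S → Prop :=
  Relation.ReflTransGen (fun s s' => tr s none s')

/-- `B` is a branching bisimulation. -/
def IsBranchingBisim (B : S → S → Prop) : Prop :=
  Symmetric B ∧
    ∀ s1 s2, B s1 s2 → ∀ a s1', tr s1 a s1' →
      (a = none ∧ B s1' s2) ∨
      (∃ s2b s2', TauStar tr s2 s2b ∧ tr s2b a s2' ∧ B s1 s2b ∧ B s1' s2')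

/-- Branching bisimilarity `≈_b`. -/
def BrBisim (s1 s2 : S) : Prop :=
  ∃ B, IsBranchingBisim tr B ∧ B s1 s2

/-- `B` is a weak bisimulation. -/
def IsWeakBisim (B : S → S → Prop) : Prop :=
  Symmetric B ∧
    ∀ s1 s2, B s1 s2 →
      (∀ s1', tr s1 none s1' → ∃ s2', TauStar tr s2 s2' ∧ B s1' s2') ∧
      (∀ x s1', tr s1 (some x) s1' →
        ∃ t t' s2', TauStar tr s2 t ∧ tr t (some x) t' ∧ TauStar tr t' s2' ∧ B s1' s2')

/-- Weak bisimilarity `≈`. -/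
def WeakBisim (s1 s2 : S) : Prop :=
  ∃ B, IsWeakBisim tr B ∧ B s1 s2

/-- Reachability via finitely many transitions. -/
def Reach : S → S → Prop :=
  Relation.ReflTransGen (fun s s' => ∃ a, tr s a s')

end LTS

section Security

variable (env : C → Proc A C) (AH : Set A)

/-- `P ∈ BrSNNI` iff `P∖A_H ≈_b P/A_H`. -/
def BrSNNI (p : Proc A C) : Prop :=
  BrBisim (Trans env) (.restrict p AH) (.hide p AH)

/-- All processes reachable from `q` perform only actions in `AH`. -/
def HighOnly (q : Proc A C) : Prop :=
  ∀ q', Reach (Trans env) q q' → ∀ a q'', Trans env q' a q'' → ∃ h ∈ AH, a = some h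

/-- `P ∈ BrNDC` iff `P∖A_H ≈_b ((P ∥_L Q)/L)∖A_H` for every high-level `Q`
and every `L ⊆ A_H`. -/
def BrNDC (p : Proc A C) : Prop :=
  ∀ q, HighOnly env AH q → ∀ L, L ⊆ AH →
    BrBisim (Trans env) (.restrict p AH) (.restrict (.hide (.par L p q) L) AH)

/-- `P ∈ SBrSNNI` iff every reachable process is BrSNNI. -/
def SBrSNNI (p : Proc A C) : Prop :=
  ∀ p', Reach (Trans env) p p' → BrSNNI env AH p'

/-- `P ∈ P_BrNDC` iff every reachable process is BrNDC. -/
def PBrNDC (p : Proc A C) : Prop :=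
  ∀ p', Reach (Trans env) p p' → BrNDC env AH p'

/-- `P ∈ SBrNDC` iff for every reachable `P'` and every high transition
`P' --h→ P''`, `P'∖A_H ≈_b P''∖A_H`. -/
def SBrNDC (p : Proc A C) : Prop :=
  ∀ p' p'', Reach (Trans env) p p' → ∀ h ∈ AH, Trans env p' (some h) p'' →
    BrBisim (Trans env) (.restrict p' AH) (.restrict p'' AH)

/-- `P ∈ BSNNI` iff `P∖A_H ≈ P/A_H`. -/
def BSNNI (p : Proc A C) : Prop :=
  WeakBisim (Trans env) (.restrict p AH) (.hide p AH)

/-- `P ∈ BNDC` iff `P∖A_H ≈ ((P ∥_L Q)/L)∖A_H` for every high-level `Q`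
and every `L ⊆ A_H`. -/
def BNDC (p : Proc A C) : Prop :=
  ∀ q, HighOnly env AH q → ∀ L, L ⊆ AH →
    WeakBisim (Trans env) (.restrict p AH) (.restrict (.hide (.par L p q) L) AH)

/-- `P ∈ SBSNNI` iff every reachable process is BSNNI. -/
def SBSNNI (p : Proc A C) : Prop :=
  ∀ p', Reach (Trans env) p p' → BSNNI env AH p'

/-- `P ∈ P_BNDC` iff every reachable process is BNDC. -/
def PBNDC (p : Proc A C) : Prop :=
  ∀ p', Reach (Trans env) p p' → BNDC env AH p'

/-- `P ∈ SBNDC` iff for every reachable `P'` and every high transition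
`P' --h→ P''`, `P'∖A_H ≈ P''∖A_H`. -/
def SBNDC (p : Proc A C) : Prop :=
  ∀ p' p'', Reach (Trans env) p p' → ∀ h ∈ AH, Trans env p' (some h) p'' →
    WeakBisim (Trans env) (.restrict p' AH) (.restrict p'' AH)

/-- No high-level actions occur in `p`: no process reachable from `p`
can perform a high-level action. -/
def NoHigh (p : Proc A C) : Prop :=
  ∀ p', Reach (Trans env) p p' → ∀ h ∈ AH, ∀ p'', ¬ Trans env p' (some h) p''

end Security

section Aux

variable {A C : Type} {env : C → Proc A C}

lemma brBisim_symm {S : Type} {tr : S → Option A → S → Prop} {s t : S}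
    (h : BrBisim tr s t) : BrBisim tr t s := by
  obtain ⟨B, hB, hst⟩ := h
  exact ⟨B, hB, hB.1 hst⟩

lemma brBisim_step {S : Type} {tr : S → Option A → S → Prop} {s t : S}
    (h : BrBisim tr s t) {a : Option A} {s' : S} (hs : tr s a s') :
    (a = none ∧ BrBisim tr s' t) ∨
    (∃ tb t', TauStar tr t tb ∧ tr tb a t' ∧ BrBisim tr s tb ∧ BrBisim tr s' t') := by
  obtain ⟨B, hB, hst⟩ := h
  rcases hB.2 s t hst a s' hs with ⟨ha, h'⟩ | ⟨tb, t', h1, h2, h3, h4⟩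
  · exact Or.inl ⟨ha, B, hB, h'⟩
  · exact Or.inr ⟨tb, t', h1, h2, ⟨B, hB, h3⟩, ⟨B, hB, h4⟩⟩

lemma restrict_trans_inv {p : Proc A C} {AH : Set A} {a : Option A} {s' : Proc A C}
    (h : Trans env (.restrict p AH) a s') :
    ∃ p', s' = .restrict p' AH ∧ Trans env p a p' ∧ ∀ x, a = some x → x ∉ AH := by
  cases h with
  | res h hn => exact ⟨_, rfl, h, hn⟩

lemma tauStar_restrict_inv {p : Proc A C} {AH : Set A} {s : Proc A C}
    (h : TauStar (Trans env) (.restrict p AH) s) :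
    ∃ p', s = .restrict p' AH ∧
      Relation.ReflTransGen (fun x y => Trans env x none y) p p' := by
  induction h with
  | refl => exact ⟨p, rfl, Relation.ReflTransGen.refl⟩
  | tail _ hstep ih =>
    obtain ⟨p', rfl, hpp'⟩ := ih
    obtain ⟨p'', rfl, hstep', _⟩ := restrict_trans_inv hstep
    exact ⟨p'', rfl, hpp'.tail hstep'⟩

lemma tauStar_par_restrict_left {L AH : Set A} {q p p' : Proc A C}
    (h : Relation.ReflTransGen (fun x y => Trans env x none y) p p') :
    TauStar (Trans env) (Proc.restrict (.par L p q) AH) (Proc.restrict (.par L p' q) AH) := by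
  induction h with
  | refl => exact Relation.ReflTransGen.refl
  | tail _ hstep ih =>
    exact ih.tail (Trans.res (Trans.parL hstep (fun x hx => nomatch hx))
      (fun x hx => nomatch hx))

lemma tauStar_par_restrict_right {L AH : Set A} {p q q' : Proc A C}
    (h : Relation.ReflTransGen (fun x y => Trans env x none y) q q') :
    TauStar (Trans env) (Proc.restrict (.par L p q) AH) (Proc.restrict (.par L p q') AH) := by
  induction h with
  | refl => exact Relation.ReflTransGen.refl
  | tail _ hstep ih =>
    exact ih.tail (Trans.res (Trans.parR hstep (fun x hx => nomatch hx))
      (fun x hx => nomatch hx))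

end Aux

/-- Lemma 4.3(3). -/
theorem sbrndc_par_restrict {A C : Type} (env : C → Proc A C)
    (hguard : ∀ c, Guarded (env c)) (AH : Set A) (P1 P2 : Proc A C)
    (h1 : SBrNDC env AH P1) (h2 : SBrNDC env AH P2) (L : Set A) :
    ∀ Q1 R1 Q2 R2 : Proc A C,
      Reach (Trans env) P1 Q1 → Reach (Trans env) P1 R1 →
      Reach (Trans env) P2 Q2 → Reach (Trans env) P2 R2 →
      Reach (Trans env) (Proc.par L P1 P2) (Proc.par L Q1 Q2) →
      Reach (Trans env) (Proc.par L P1 P2) (Proc.par L R1 R2) →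
      BrBisim (Trans env) (Proc.restrict Q1 AH) (Proc.restrict R1 AH) →
      BrBisim (Trans env) (Proc.restrict Q2 AH) (Proc.restrict R2 AH) →
      BrBisim (Trans env) (Proc.restrict (Proc.par L Q1 Q2) AH)
        (Proc.restrict (Proc.par L R1 R2) AH) := by
  intro Q1 R1 Q2 R2 _ _ _ _ _ _ hb1 hb2
  set tr := Trans env
  refine ⟨fun s t => ∃ q1 q2 r1 r2 : Proc A C,
      s = Proc.restrict (.par L q1 q2) AH ∧ t = Proc.restrict (.par L r1 r2) AH ∧
      BrBisim tr (.restrict q1 AH) (.restrict r1 AH) ∧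
      BrBisim tr (.restrict q2 AH) (.restrict r2 AH), ⟨?_, ?_⟩,
      Q1, Q2, R1, R2, rfl, rfl, hb1, hb2⟩
  · rintro s t ⟨q1, q2, r1, r2, rfl, rfl, hb1, hb2⟩
    exact ⟨r1, r2, q1, q2, rfl, rfl, brBisim_symm hb1, brBisim_symm hb2⟩
  · rintro s t ⟨q1, q2, r1, r2, rfl, rfl, hb1, hb2⟩ a s' hs
    obtain ⟨p', rfl, hpar, hnAH⟩ := restrict_trans_inv hs
    cases hpar with
    | parL hq hnL =>
      rename_i q1'
      rcases brBisim_step hb1 (Trans.res hq hnAH) with ⟨rfl, hb1'⟩ |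
        ⟨tb, t', hts, hstep, hbm, hb1'⟩
      · exact Or.inl ⟨rfl, q1', q2, r1, r2, rfl, rfl, hb1', hb2⟩
      · obtain ⟨r1b, rfl, hts'⟩ := tauStar_restrict_inv hts
        obtain ⟨r1', rfl, hr, _⟩ := restrict_trans_inv hstep
        refine Or.inr ⟨Proc.restrict (.par L r1b r2) AH, Proc.restrict (.par L r1' r2) AH,
          tauStar_par_restrict_left hts', Trans.res (Trans.parL hr hnL) hnAH,
          ⟨q1, q2, r1b, r2, rfl, rfl, hbm, hb2⟩, ⟨q1', q2, r1', r2, rfl, rfl, hb1', hb2⟩⟩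
    | parR hq hnL =>
      rename_i q2'
      rcases brBisim_step hb2 (Trans.res hq hnAH) with ⟨rfl, hb2'⟩ |
        ⟨tb, t', hts, hstep, hbm, hb2'⟩
      · exact Or.inl ⟨rfl, q1, q2', r1, r2, rfl, rfl, hb1, hb2'⟩
      · obtain ⟨r2b, rfl, hts'⟩ := tauStar_restrict_inv hts
        obtain ⟨r2', rfl, hr, _⟩ := restrict_trans_inv hstep
        refine Or.inr ⟨Proc.restrict (.par L r1 r2b) AH, Proc.restrict (.par L r1 r2') AH,
          tauStar_par_restrict_right hts', Trans.res (Trans.parR hr hnL) hnAH,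
          ⟨q1, q2, r1, r2b, rfl, rfl, hb1, hbm⟩, ⟨q1, q2', r1, r2', rfl, rfl, hb1, hb2'⟩⟩
    | sync hq1 hq2 hxL =>
      rename_i x q1' q2'
      rcases brBisim_step hb1 (Trans.res hq1 hnAH) with ⟨h', _⟩ |
        ⟨tb1, t1', hts1, hstep1, hbm1, hb1'⟩
      · exact absurd h' (by simp)
      rcases brBisim_step hb2 (Trans.res hq2 hnAH) with ⟨h', _⟩ |
        ⟨tb2, t2', hts2, hstep2, hbm2, hb2'⟩
      · exact absurd h' (by simp)
      obtain ⟨r1b, rfl, hts1'⟩ := tauStar_restrict_inv hts1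
      obtain ⟨r1', rfl, hr1, _⟩ := restrict_trans_inv hstep1
      obtain ⟨r2b, rfl, hts2'⟩ := tauStar_restrict_inv hts2
      obtain ⟨r2', rfl, hr2, _⟩ := restrict_trans_inv hstep2
      refine Or.inr ⟨Proc.restrict (.par L r1b r2b) AH, Proc.restrict (.par L r1' r2') AH,
        Relation.ReflTransGen.trans (tauStar_par_restrict_left hts1')
          (tauStar_par_restrict_right hts2'),
        Trans.res (Trans.sync hr1 hr2 hxL) hnAH,
        ⟨q1, q2, r1b, r2b, rfl, rfl, hbm1, hbm2⟩,
        ⟨q1', q2', r1', r2', rfl, rfl, hb1', hb2'⟩⟩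

end SecurityNI
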